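/- Let A be a symmetric d×d matrix, f(x) = (1/4)(xᵀAx)² and h(x) = (1/4)‖x‖₂⁴. Then for any L ≥ 3‖A‖₂², the functions L·h + f and L·h − f are convex; i.e., f is L-smooth relative to h. -/

import Mathlib

open RealInnerProductSpace

private lemma convexOn_quartic (a b c e f : ℝ)
    (h : ∀ t : ℝ, 0 ≤ 12 * a * t ^ 2 + 6 * b * t + 2 * c) :
    ConvexOn ℝ Set.univ (fun t : ℝ => a * t ^ 4 + b * t ^ 3 + c * t ^ 2 + e * t + f) := by
  set F : ℝ → ℝ := fun t => a * t ^ 4 + b * t ^ 3 + c * t ^ 2 + e * t + f with hF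
  have hd1 : ∀ t : ℝ, HasDerivAt F (4 * a * t ^ 3 + 3 * b * t ^ 2 + 2 * c * t + e) t := by
    intro t
    have := ((((hasDerivAt_pow 4 t).const_mul a).add
      ((hasDerivAt_pow 3 t).const_mul b)).add
      ((hasDerivAt_pow 2 t).const_mul c)).add
      (((hasDerivAt_id t).const_mul e).add_const f)
    convert this using 1
    · rfl
    · rfl
    · ext s; simp [hF]; ring
    · ring
  have hderiv : deriv F = fun t => 4 * a * t ^ 3 + 3 * b * t ^ 2 + 2 * c * t + e := by
    ext t; exact (hd1 t).deriv
  have hd2 : ∀ t : ℝ, HasDerivAt (deriv F) (12 * a * t ^ 2 + 6 * b * t + 2 * c) t := by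
    intro t
    rw [hderiv]
    have := ((((hasDerivAt_pow 3 t).const_mul (4 * a)).add
      ((hasDerivAt_pow 2 t).const_mul (3 * b))).add
      (((hasDerivAt_id t).const_mul (2 * c)).add_const e))
    convert this using 1
    · rfl
    · rfl
    · ext s; simp only [id, Pi.add_apply]; ring
    · ring
  apply convexOn_of_deriv2_nonneg' convex_univ
  · intro t _; exact (hd1 t).differentiableAt.differentiableWithinAt
  · intro t _; exact (hd2 t).differentiableAt.differentiableWithinAt
  · intro t _
    have h2 : deriv (deriv F) t = 12 * a * t ^ 2 + 6 * b * t + 2 * c := (hd2 t).deriv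
    simp only [Function.iterate_succ, Function.iterate_zero, Function.comp_apply, id]
    rw [h2]; exact h t

private lemma convexOn_of_lines {E : Type*} [NormedAddCommGroup E] [NormedSpace ℝ E]
    (g : E → ℝ) (h : ∀ x v : E, ConvexOn ℝ Set.univ (fun t : ℝ => g (x + t • v))) :
    ConvexOn ℝ Set.univ g := by
  refine ⟨convex_univ, ?_⟩
  intro x _ y _ a b ha hb hab
  have key := (h x (y - x)).2 (Set.mem_univ (0 : ℝ)) (Set.mem_univ (1 : ℝ)) ha hb hab
  simp only [smul_eq_mul, mul_zero, mul_one, zero_add] at key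
  have hxy : x + b • (y - x) = a • x + b • y := by
    have hb1 : a = 1 - b := by linarith
    rw [hb1]; module
  have h0 : x + (0 : ℝ) • (y - x) = x := by module
  have h1 : x + (1 : ℝ) • (y - x) = y := by module
  rw [hxy, h0, h1] at key
  simpa [smul_eq_mul] using key

set_option maxHeartbeats 1000000 in
private lemma convexOn_combo {d : ℕ}
    (T : EuclideanSpace ℝ (Fin d) →L[ℝ] EuclideanSpace ℝ (Fin d))
    (hsym : ∀ x y : EuclideanSpace ℝ (Fin d), ⟪T x, y⟫ = ⟪x, T y⟫)
    (L e : ℝ) (hL : 3 * ‖T‖ ^ 2 ≤ L) (he : e = 1 / 4 ∨ e = -(1 / 4)) :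
    ConvexOn ℝ Set.univ (fun x : EuclideanSpace ℝ (Fin d) =>
      L * (1 / 4 * ‖x‖ ^ 4) + e * ⟪x, T x⟫ ^ 2) := by
  set a : ℝ := ‖T‖ with ha
  have ha0 : 0 ≤ a := norm_nonneg _
  have hL0 : 0 ≤ L := le_trans (by positivity) hL
  apply convexOn_of_lines
  intro x v
  set V : ℝ := ‖x‖ ^ 2 with hV
  set U : ℝ := ‖v‖ ^ 2 with hU
  set W : ℝ := ⟪x, v⟫ with hW
  set p : ℝ := ⟪x, T x⟫ with hp
  set n : ℝ := ⟪x, T v⟫ with hn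
  set m : ℝ := ⟪v, T v⟫ with hm
  set c : ℝ := L / 4 with hc
  have hnorm : ∀ t : ℝ, ‖x + t • v‖ ^ 2 = V + 2 * W * t + U * t ^ 2 := by
    intro t
    rw [show ‖x + t • v‖ ^ 2 = ‖x + t • v‖ * ‖x + t • v‖ by ring, norm_add_mul_self_real,
      real_inner_smul_right, norm_smul]
    simp only [Real.norm_eq_abs]
    rw [mul_mul_mul_comm, ← sq_abs t]
    simp only [hV, hU, hW]; ring
  have hcross : ∀ t : ℝ, ⟪x + t • v, T (x + t • v)⟫ = p + 2 * n * t + m * t ^ 2 := by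
    intro t
    rw [map_add, map_smul]
    simp only [inner_add_left, inner_add_right, real_inner_smul_left, real_inner_smul_right]
    have hvTx : ⟪v, T x⟫ = n := by
      rw [real_inner_comm, hsym]
    rw [hvTx]; simp only [hp, hn, hm]; ring
  have key : ConvexOn ℝ Set.univ (fun t : ℝ =>
      (c * U ^ 2 + e * m ^ 2) * t ^ 4 + (4 * c * U * W + 4 * e * m * n) * t ^ 3 +
      (c * (2 * U * V + 4 * W ^ 2) + e * (2 * m * p + 4 * n ^ 2)) * t ^ 2 +
      (4 * c * V * W + 4 * e * n * p) * t + (c * V ^ 2 + e * p ^ 2)) := by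
    apply convexOn_quartic
    intro t
    set z : EuclideanSpace ℝ (Fin d) := x + t • v with hz
    have hPz : W + U * t = ⟪z, v⟫ := by
      rw [hz, inner_add_left, real_inner_smul_left, real_inner_self_eq_norm_sq]
      simp only [hW, hU]; ring
    have hNz : n + m * t = ⟪z, T v⟫ := by
      rw [hz, inner_add_left, real_inner_smul_left]
      simp only [hn, hm]; ring
    have hid : 12 * (c * U ^ 2 + e * m ^ 2) * t ^ 2 + 6 * (4 * c * U * W + 4 * e * m * n) * t +
        2 * (c * (2 * U * V + 4 * W ^ 2) + e * (2 * m * p + 4 * n ^ 2)) =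
        4 * c * (2 * (W + U * t) ^ 2 + U * (V + 2 * W * t + U * t ^ 2)) +
        4 * e * (2 * (n + m * t) ^ 2 + m * (p + 2 * n * t + m * t ^ 2)) := by ring
    rw [hid, hPz, hNz, ← hnorm t, ← hcross t, ← hz]
    -- geometric bounds at the point z
    set Q : ℝ := ‖z‖ ^ 2 with hQ
    set P : ℝ := ⟪z, v⟫ with hP
    set N : ℝ := ⟪z, T v⟫ with hN
    set S : ℝ := ⟪z, T z⟫ with hS
    have hQ0 : 0 ≤ Q := sq_nonneg _
    have hU0 : 0 ≤ U := sq_nonneg _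
    have hUQ : 0 ≤ U * Q := mul_nonneg hU0 hQ0
    have hNabs : |N| ≤ ‖z‖ * (a * ‖v‖) := by
      calc |N| ≤ ‖z‖ * ‖T v‖ := abs_real_inner_le_norm z (T v)
        _ ≤ ‖z‖ * (a * ‖v‖) := by
            gcongr
            exact T.le_opNorm v
    have hN2 : N ^ 2 ≤ a ^ 2 * (U * Q) := by
      have h' := mul_self_le_mul_self (abs_nonneg N) hNabs
      rw [abs_mul_abs_self] at h'
      calc N ^ 2 = N * N := sq N
        _ ≤ ‖z‖ * (a * ‖v‖) * (‖z‖ * (a * ‖v‖)) := h'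
        _ = a ^ 2 * (U * Q) := by simp only [hU, hQ]; ring
    have hSabs : |S| ≤ a * Q := by
      calc |S| ≤ ‖z‖ * ‖T z‖ := abs_real_inner_le_norm z (T z)
        _ ≤ ‖z‖ * (a * ‖z‖) := by gcongr; exact T.le_opNorm z
        _ = a * Q := by rw [hQ]; ring
    have hmabs : |m| ≤ a * U := by
      calc |m| ≤ ‖v‖ * ‖T v‖ := abs_real_inner_le_norm v (T v)
        _ ≤ ‖v‖ * (a * ‖v‖) := by gcongr; exact T.le_opNorm v
        _ = a * U := by rw [hU]; ring
    have hmS : |m * S| ≤ a ^ 2 * (U * Q) := by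
      rw [abs_mul]
      calc |m| * |S| ≤ (a * U) * (a * Q) :=
          mul_le_mul hmabs hSabs (abs_nonneg _) (by positivity)
        _ = a ^ 2 * (U * Q) := by ring
    have hmS1 := (abs_le.mp hmS).1
    have hmS2 := (abs_le.mp hmS).2
    have hLUQ : 3 * a ^ 2 * (U * Q) ≤ L * (U * Q) :=
      mul_le_mul_of_nonneg_right hL hUQ
    have hLP : 0 ≤ L * P ^ 2 := mul_nonneg hL0 (sq_nonneg P)
    have hsq : 0 ≤ a ^ 2 * (U * Q) := by positivity
    rcases he with he | he <;> rw [he, hc] <;>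
      linarith [sq_nonneg N, hN2, hmS1, hmS2, hLUQ, hLP, hsq]
  have hfun : (fun t : ℝ => L * (1 / 4 * ‖x + t • v‖ ^ 4) + e * ⟪x + t • v, T (x + t • v)⟫ ^ 2) =
      (fun t : ℝ =>
      (c * U ^ 2 + e * m ^ 2) * t ^ 4 + (4 * c * U * W + 4 * e * m * n) * t ^ 3 +
      (c * (2 * U * V + 4 * W ^ 2) + e * (2 * m * p + 4 * n ^ 2)) * t ^ 2 +
      (4 * c * V * W + 4 * e * n * p) * t + (c * V ^ 2 + e * p ^ 2)) := by
    funext t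
    rw [show ‖x + t • v‖ ^ 4 = (‖x + t • v‖ ^ 2) ^ 2 by ring, hnorm t, hcross t, hc]
    ring
  rw [← hfun] at key
  exact key

theorem quartic_relative_smoothness {d : ℕ}
    (A : Matrix (Fin d) (Fin d) ℝ) (hA : A.IsSymm) (L : ℝ)
    (hL : 3 * ‖Matrix.toEuclideanCLM (𝕜 := ℝ) A‖ ^ 2 ≤ L) :
    ConvexOn ℝ Set.univ (fun x : EuclideanSpace ℝ (Fin d) =>
        L * (1 / 4 * ‖x‖ ^ 4) + 1 / 4 * ⟪x, Matrix.toEuclideanCLM (𝕜 := ℝ) A x⟫ ^ 2) ∧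
      ConvexOn ℝ Set.univ (fun x : EuclideanSpace ℝ (Fin d) =>
        L * (1 / 4 * ‖x‖ ^ 4) - 1 / 4 * ⟪x, Matrix.toEuclideanCLM (𝕜 := ℝ) A x⟫ ^ 2) := by
  set T := Matrix.toEuclideanCLM (𝕜 := ℝ) A with hT
  have h1 : A.IsHermitian := hA
  have h2 : IsSelfAdjoint T := by
    rw [IsSelfAdjoint, hT, ← map_star]
    exact congrArg _ h1.isSelfAdjoint
  have hsym : ∀ x y : EuclideanSpace ℝ (Fin d), ⟪T x, y⟫ = ⟪x, T y⟫ := fun x y =>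
    h2.isSymmetric x y
  constructor
  · exact convexOn_combo T hsym L (1 / 4) hL (Or.inl rfl)
  · have hminus := convexOn_combo T hsym L (-(1 / 4)) hL (Or.inr rfl)
    have heq : (fun x : EuclideanSpace ℝ (Fin d) =>
        L * (1 / 4 * ‖x‖ ^ 4) - 1 / 4 * ⟪x, T x⟫ ^ 2) =
        (fun x : EuclideanSpace ℝ (Fin d) =>
        L * (1 / 4 * ‖x‖ ^ 4) + -(1 / 4) * ⟪x, T x⟫ ^ 2) := by
      funext x; ring
    rw [heq]
    exact hminus
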